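/- Let q be a prime power, K an algebraic closure of F_q, and γ ∈ K with γ^(q^4+q^2+1) = 1. Set δ = γ^(q^2-q+1). For a (q^2+q+1)-th root of unity t ∈ K, the condition 1 + t·γ^(q^3+1) + t^(q^2+1)·γ^(q^2-q+1) = 0 holds if and only if δ·u^(q+1) + u + δ^(q+1) = 0 where u = t^(-1). Consequently, the number of (q^2+q+1)-th roots of unity t for which the condition holds is exactly q + 1. -/

import Mathlib

open Polynomial

theorem stmt_8 (F : Type*) [Field F] [Fintype F] (q : ℕ) (hq : Fintype.card F = q)
    (γ : AlgebraicClosure F) (hγ : γ ^ (q^4 + q^2 + 1) = 1) :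
    (∀ t : AlgebraicClosure F, t ^ (q^2 + q + 1) = 1 →
      (1 + t * γ ^ (q^3 + 1) + t ^ (q^2 + 1) * γ ^ (q^2 - q + 1) = 0 ↔
        γ ^ (q^2 - q + 1) * (t⁻¹) ^ (q + 1) + t⁻¹ + (γ ^ (q^2 - q + 1)) ^ (q + 1) = 0)) ∧
    Set.ncard {t : AlgebraicClosure F | t ^ (q^2 + q + 1) = 1 ∧
      1 + t * γ ^ (q^3 + 1) + t ^ (q^2 + 1) * γ ^ (q^2 - q + 1) = 0} = q + 1 := by
  classical
  let K := AlgebraicClosure F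
  have hq2 : 2 ≤ q := hq ▸ Fintype.one_lt_card
  have hqq : q ≤ q ^ 2 := Nat.le_self_pow two_ne_zero q
  have e1 : (q ^ 2 - q + 1) * (q + 1) = q ^ 3 + 1 := by zify [hqq]; ring
  have e2 : (q ^ 2 - q + 1) * (q ^ 2 + q + 1) = q ^ 4 + q ^ 2 + 1 := by zify [hqq]; ring
  set a : K := γ ^ (q ^ 2 - q + 1) with ha_def
  have han : a ^ (q ^ 2 + q + 1) = 1 := by rw [ha_def, ← pow_mul, e2, hγ]
  have hA : γ ^ (q ^ 3 + 1) = a ^ (q + 1) := by rw [ha_def, ← pow_mul, e1]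
  have hnne : q ^ 2 + q + 1 ≠ 0 := by positivity
  have ha : a ≠ 0 := by
    intro h; rw [h, zero_pow hnne] at han; exact zero_ne_one han
  -- characteristic setup
  obtain ⟨p, hc⟩ := CharP.exists F
  haveI : CharP F p := hc
  obtain ⟨k, hp, hk⟩ := FiniteField.card F p
  haveI : CharP K p := charP_of_injective_algebraMap (algebraMap F K).injective p
  haveI : Fact p.Prime := ⟨hp⟩
  have hkq : q = p ^ (k : ℕ) := by rw [← hq, hk]
  have frob : ∀ x y : K, (x + y) ^ q = x ^ q + y ^ q := by
    intro x y; rw [hkq]; exact add_pow_char_pow x y p k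
  have hq0K : (q : K) = 0 := by
    rw [hkq]; push_cast
    rw [CharP.cast_eq_zero K p, zero_pow (by exact_mod_cast k.ne_zero)]
  have hqne : q ≠ 0 := by omega
  -- every root of the Hermitian-type equation is a (q^2+q+1)-th root of unity
  have root_pow : ∀ u : K, a * u ^ (q + 1) + u + a ^ (q + 1) = 0 →
      u ^ (q ^ 2 + q + 1) = 1 := by
    intro u h
    have e3 : ∀ x : K, x ^ (q ^ 2 + q + 1) = (x ^ q) ^ q * x ^ q * x := by
      intro x
      rw [← pow_mul, ← pow_add, ← pow_succ]
      congr 1; ring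
    have e4 : ∀ x : K, x ^ (q + 1) = x ^ q * x := fun x => pow_succ x q
    have h2 : a ^ q * ((u ^ q) ^ q * u ^ q) + u ^ q + (a ^ q) ^ q * a ^ q = 0 := by
      have h' := congrArg (· ^ q) h
      simp only [zero_pow hqne] at h'
      rw [frob, frob, mul_pow] at h'
      calc a ^ q * ((u ^ q) ^ q * u ^ q) + u ^ q + (a ^ q) ^ q * a ^ q
          = a ^ q * (u ^ (q + 1)) ^ q + u ^ q + (a ^ (q + 1)) ^ q := by
            rw [e4 u, e4 a, mul_pow, mul_pow]
        _ = 0 := h'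
    have han' : (a ^ q) ^ q * a ^ q * a = 1 := by rw [← e3]; exact han
    rw [e4 u, e4 a] at h
    have key : a ^ q * a * ((u ^ q) ^ q * u ^ q * u) = a ^ q * a * 1 := by
      linear_combination (u * a) * h2 - h - u * han'
    rw [e3 u]
    exact mul_left_cancel₀ (mul_ne_zero (pow_ne_zero q ha) ha) key
  -- the equivalence
  have equiv : ∀ t : K, t ^ (q ^ 2 + q + 1) = 1 →
      (1 + t * γ ^ (q ^ 3 + 1) + t ^ (q ^ 2 + 1) * a = 0 ↔
        a * (t⁻¹) ^ (q + 1) + t⁻¹ + a ^ (q + 1) = 0) := by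
    intro t ht
    have ht0 : t ≠ 0 := by
      intro h; rw [h, zero_pow hnne] at ht; exact zero_ne_one ht
    have htq : (t⁻¹) ^ (q + 1) = t ^ (q ^ 2) := by
      rw [inv_pow]
      have hmul : t ^ (q + 1) * t ^ (q ^ 2) = 1 := by
        rw [← pow_add, show q + 1 + q ^ 2 = q ^ 2 + q + 1 from by ring]; exact ht
      exact inv_eq_of_mul_eq_one_right hmul
    have key : a * (t⁻¹) ^ (q + 1) + t⁻¹ + a ^ (q + 1) =
        t⁻¹ * (1 + t * γ ^ (q ^ 3 + 1) + t ^ (q ^ 2 + 1) * a) := by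
      rw [htq, hA]
      have hti : t⁻¹ * t = 1 := inv_mul_cancel₀ ht0
      rw [pow_succ t (q ^ 2)]
      linear_combination (-(a ^ (q + 1) + a * t ^ (q ^ 2))) * hti
    rw [key, mul_eq_zero]
    simp [inv_eq_zero, ht0]
  refine ⟨fun t ht => equiv t ht, ?_⟩
  -- the counting part
  set P : K[X] := X ^ (q + 1) + (C a⁻¹ * X + C (a ^ q)) with hP_def
  have hdegP : P.degree = (q + 1 : ℕ) := by
    rw [hP_def]
    rw [degree_add_eq_left_of_degree_lt, degree_X_pow]
    rw [degree_X_pow]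
    calc (C a⁻¹ * X + C (a ^ q)).degree ≤ 1 := degree_linear_le
      _ = ((1 : ℕ) : WithBot ℕ) := by norm_num
      _ < ((q + 1 : ℕ) : WithBot ℕ) := by
          rw [Nat.cast_lt]; omega
  have hndegP : P.natDegree = q + 1 := natDegree_eq_of_degree_eq_some hdegP
  have hP0 : P ≠ 0 := by
    intro h; rw [h, natDegree_zero] at hndegP; omega
  have hev : ∀ u : K, P.eval u = u ^ (q + 1) + a⁻¹ * u + a ^ q := by
    intro u; simp [hP_def]; ring
  have hbridge : ∀ u : K, (a * u ^ (q + 1) + u + a ^ (q + 1) = 0) ↔ P.eval u = 0 := by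
    intro u
    have hfac : a * P.eval u = a * u ^ (q + 1) + u + a ^ (q + 1) := by
      rw [hev]; have hai : a * a⁻¹ = 1 := mul_inv_cancel₀ ha; linear_combination u * hai
    rw [← hfac, mul_eq_zero]
    simp [ha]
  have hder : derivative P = X ^ q + C a⁻¹ := by
    rw [hP_def]
    simp only [derivative_add, derivative_X_pow, derivative_mul, derivative_C, derivative_X,
      zero_mul, mul_one, zero_add, add_zero, Nat.add_sub_cancel]
    push_cast [hq0K]
    simp
  have hsep : P.Separable := by
    refine ⟨C ((a ^ q)⁻¹), -(C ((a ^ q)⁻¹) * X), ?_⟩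
    rw [hder, hP_def]
    have h2 : C ((a ^ q)⁻¹) * C (a ^ q) = 1 := by
      rw [← C_mul, inv_mul_cancel₀ (pow_ne_zero q ha), C_1]
    linear_combination h2
  have hcardroot : Fintype.card (P.rootSet K) = q + 1 := by
    rw [Polynomial.card_rootSet_eq_natDegree hsep (IsAlgClosed.splits_domain P), hndegP]
  have hrootmem : ∀ u : K, u ∈ P.rootSet K ↔ P.eval u = 0 := by
    intro u
    rw [mem_rootSet]
    simp [hP0, coe_aeval_eq_eval]
  have hset : {t : K | t ^ (q ^ 2 + q + 1) = 1 ∧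
      1 + t * γ ^ (q ^ 3 + 1) + t ^ (q ^ 2 + 1) * a = 0} = Inv.inv ⁻¹' (P.rootSet K) := by
    ext t
    simp only [Set.mem_setOf_eq, Set.mem_preimage, hrootmem]
    constructor
    · rintro ⟨ht, hE⟩
      exact (hbridge t⁻¹).mp ((equiv t ht).mp hE)
    · intro hr
      have hQ := (hbridge t⁻¹).mpr hr
      have hu1 := root_pow _ hQ
      have ht : t ^ (q ^ 2 + q + 1) = 1 := by
        rwa [inv_pow, inv_eq_one] at hu1
      exact ⟨ht, (equiv t ht).mpr hQ⟩
  rw [hset]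
  have hpre : Inv.inv ⁻¹' (P.rootSet K) = Inv.inv '' (P.rootSet K) := by
    ext t
    constructor
    · intro h; exact ⟨t⁻¹, h, inv_inv t⟩
    · rintro ⟨u, hu, rfl⟩; rwa [Set.mem_preimage, inv_inv]
  rw [hpre, Set.ncard_image_of_injective _ inv_injective,
    ← Nat.card_coe_set_eq, Nat.card_eq_fintype_card, hcardroot]
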